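/- Let C and D be finite persistence diagrams indexed by an optimal bottleneck matching, and suppose every point of C and D has birth b ≥ 1. With ψ(b,d) = d/b (multiplicative life), one has maxᵢ |ψᵢ^C − ψᵢ^D| ≤ (1 + M)·W∞(C,D), where M = maxᵢ max{dᵢ^C, dᵢ^D}. -/
import Mathlib


open Finset

/-- With births at least `1` and `ψ(b,d) = d/b` (multiplicative life),
`maxᵢ |ψᵢ^C − ψᵢ^D| ≤ (1 + M)·W∞(C,D)` where
`M = maxᵢ max{dᵢ^C, dᵢ^D}`, for diagrams indexed by an optimal bottleneck
matching with cost `W`. -/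
theorem multiplicative_life_stability (n : ℕ) (hn : 0 < n)
    (bC dC bD dD : Fin n → ℝ)
    (hbC : ∀ i, 1 ≤ bC i) (hbD : ∀ i, 1 ≤ bD i)
    (hCbd : ∀ i, bC i ≤ dC i) (hDbd : ∀ i, bD i ≤ dD i)
    (W : ℝ)  -- the bottleneck distance `W∞(C, D)`
    (hmatch : ∀ i, max |bC i - bD i| |dC i - dD i| ≤ W)
    (M : ℝ)
    (hM : M = Finset.univ.sup' ⟨⟨0, hn⟩, Finset.mem_univ _⟩ fun i => max (dC i) (dD i)) :
    (Finset.univ.sup' ⟨⟨0, hn⟩, Finset.mem_univ _⟩ fun i =>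
        |dC i / bC i - dD i / bD i|) ≤ (1 + M) * W := by
  apply Finset.sup'_le
  intro i _
  have hb1 : (1:ℝ) ≤ bC i := hbC i
  have hb2 : (1:ℝ) ≤ bD i := hbD i
  have hb1p : (0:ℝ) < bC i := lt_of_lt_of_le one_pos hb1
  have hb2p : (0:ℝ) < bD i := lt_of_lt_of_le one_pos hb2
  have hd2 : (0:ℝ) ≤ dD i := le_trans (le_trans zero_le_one hb2) (hDbd i)
  have hWb : |bC i - bD i| ≤ W := le_trans (le_max_left _ _) (hmatch i)
  have hWd : |dC i - dD i| ≤ W := le_trans (le_max_right _ _) (hmatch i)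
  have hW0 : 0 ≤ W := le_trans (abs_nonneg _) hWb
  have hMd : dD i ≤ M := by
    rw [hM]
    exact le_trans (le_max_right _ _)
      (Finset.le_sup' (fun i => max (dC i) (dD i)) (Finset.mem_univ i))
  have hM0 : 0 ≤ M := le_trans hd2 hMd
  have key : |dC i / bC i - dD i / bD i| ≤ |dC i - dD i| + dD i * |bD i - bC i| := by
    have heq : dC i / bC i - dD i / bD i
        = ((dC i - dD i) * bD i + dD i * (bD i - bC i)) / (bC i * bD i) := by
      field_simp; ring
    rw [heq, abs_div, abs_of_pos (mul_pos hb1p hb2p)]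
    have h1 : |(dC i - dD i) * bD i + dD i * (bD i - bC i)|
        ≤ |dC i - dD i| * bD i + dD i * |bD i - bC i| := by
      calc |(dC i - dD i) * bD i + dD i * (bD i - bC i)|
          ≤ |(dC i - dD i) * bD i| + |dD i * (bD i - bC i)| := abs_add_le _ _
        _ = |dC i - dD i| * bD i + dD i * |bD i - bC i| := by
            rw [abs_mul, abs_mul, abs_of_pos hb2p, abs_of_nonneg hd2]
    have hbb : (1:ℝ) ≤ bC i * bD i := one_le_mul_of_one_le_of_one_le hb1 hb2
    calc |(dC i - dD i) * bD i + dD i * (bD i - bC i)| / (bC i * bD i)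
        ≤ (|dC i - dD i| * bD i + dD i * |bD i - bC i|) / (bC i * bD i) := by
          gcongr
      _ ≤ |dC i - dD i| + dD i * |bD i - bC i| := by
          rw [div_le_iff₀ (lt_of_lt_of_le one_pos hbb)]
          nlinarith [mul_nonneg (abs_nonneg (dC i - dD i)) (mul_nonneg hb2p.le (sub_nonneg.2 hb1)),
            mul_nonneg (mul_nonneg hd2 (abs_nonneg (bD i - bC i))) (sub_nonneg.2 hbb)]
  have hWb' : |bD i - bC i| ≤ W := by rwa [abs_sub_comm]
  calc |dC i / bC i - dD i / bD i| ≤ |dC i - dD i| + dD i * |bD i - bC i| := key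
    _ ≤ W + M * W := add_le_add hWd (by nlinarith [abs_nonneg (bD i - bC i)])
    _ = (1 + M) * W := by ring
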